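/- arXiv:2312.06812 — 3 statements merged into one kernel-verified Lean document; each statement's English description precedes it below -/
import Mathlib

section
/- Let A = [[E,F],[F,G]] be a 2×2 complex symmetric matrix whose entrywise real part Re(A) is positive definite. Then for every s ∈ ℂ with Re(s) > 1 the family (Q_A(j)^{−s})_{j∈ℤ²∖{0}} is absolutely summable, and the Epstein zeta function Z_A(s) = ∑_{j∈ℤ², j≠0} Q_A(j)^{−s} is an analytic (complex differentiable) function of s on the half-plane {s ∈ ℂ : Re(s) > 1}. -/
open Complex MeasureTheory Filter

noncomputable section

/-- Quadratic form `Q_A(v) = E v₁² + 2F v₁v₂ + G v₂²` of a 2×2 complex matrix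
`A = [[E,F],[F,G]]`, evaluated at a real vector `v = (v₁, v₂)`. -/
def quadForm (A : Matrix (Fin 2) (Fin 2) ℂ) (v : ℝ × ℝ) : ℂ :=
  A 0 0 * (v.1 : ℂ) ^ 2 + 2 * A 0 1 * (v.1 : ℂ) * (v.2 : ℂ) + A 1 1 * (v.2 : ℂ) ^ 2

/-- Quadratic form evaluated at a lattice point `j ∈ ℤ²`. -/
def quadFormZ (A : Matrix (Fin 2) (Fin 2) ℂ) (j : ℤ × ℤ) : ℂ :=
  quadForm A ((j.1 : ℝ), (j.2 : ℝ))

/-- Entrywise real part of a complex matrix. -/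
def reMat (A : Matrix (Fin 2) (Fin 2) ℂ) : Matrix (Fin 2) (Fin 2) ℝ :=
  A.map Complex.re

/- ### Auxiliary lemmas -/

lemma lat_summable {k : ℝ} (hk : 2 < k) :
    Summable fun j : ℤ × ℤ => ‖((j.1 : ℝ), (j.2 : ℝ))‖ ^ (-k) := by
  have h := (EisensteinSeries.summable_one_div_norm_rpow hk).comp_injective
    (finTwoArrowEquiv ℤ).symm.injective
  refine h.congr fun j => ?_
  show ‖(finTwoArrowEquiv ℤ).symm j‖ ^ (-k) = _
  congr 1
  rw [EisensteinSeries.norm_eq_max_natAbs, Prod.norm_def]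
  simp only [finTwoArrowEquiv_symm_apply, Matrix.cons_val_zero, Matrix.cons_val_one,
    Matrix.head_cons, Real.norm_eq_abs, Nat.cast_max]
  push_cast [Nat.cast_natAbs]
  simp [Int.cast_abs]

lemma quadForm_re (A : Matrix (Fin 2) (Fin 2) ℂ) (v : ℝ × ℝ) :
    (quadForm A v).re = (A 0 0).re * v.1 ^ 2 + 2 * (A 0 1).re * v.1 * v.2
      + (A 1 1).re * v.2 ^ 2 := by
  simp only [quadForm, Complex.add_re, Complex.mul_re, ← Complex.ofReal_pow,
    Complex.ofReal_re, Complex.ofReal_im, Complex.mul_im]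
  norm_num
  try ring

lemma quadForm_re_pos (A : Matrix (Fin 2) (Fin 2) ℂ) (hsym : A.IsSymm)
    (hpd : (reMat A).PosDef) {v : ℝ × ℝ} (hv : v ≠ 0) : 0 < (quadForm A v).re := by
  have hx : ![v.1, v.2] ≠ 0 := by
    intro h
    apply hv
    have h1 : v.1 = 0 := congrFun h 0
    have h2 : v.2 = 0 := congrFun h 1
    exact Prod.ext h1 h2
  have := hpd.dotProduct_mulVec_pos hx
  have hA : A 1 0 = A 0 1 := hsym.apply 0 1
  simp only [dotProduct, Matrix.mulVec, Fin.sum_univ_two, reMat, Matrix.map_apply,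
    Pi.star_apply, star_trivial, Matrix.cons_val_zero, Matrix.cons_val_one, Matrix.head_cons,
    RCLike.re_to_real, hA] at this
  rw [quadForm_re]
  nlinarith [this]

lemma coercive (A : Matrix (Fin 2) (Fin 2) ℂ) (hsym : A.IsSymm) (hpd : (reMat A).PosDef) :
    ∃ c > 0, ∀ v : ℝ × ℝ, c * ‖v‖ ^ 2 ≤ (quadForm A v).re := by
  have hcont : Continuous fun v : ℝ × ℝ => (quadForm A v).re := by
    apply Complex.continuous_re.comp
    unfold quadForm; fun_prop
  obtain ⟨v0, hv0, hmin⟩ := (isCompact_sphere (0 : ℝ × ℝ) 1).exists_isMinOn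
    ⟨((1 : ℝ), (0 : ℝ)), by simp [Prod.norm_def]⟩ hcont.continuousOn
  have hv0norm : ‖v0‖ = 1 := by simpa using mem_sphere_zero_iff_norm.mp hv0
  have hv0ne : v0 ≠ 0 := by intro h; rw [h] at hv0norm; simp at hv0norm
  refine ⟨(quadForm A v0).re, quadForm_re_pos A hsym hpd hv0ne, fun v => ?_⟩
  rcases eq_or_ne v 0 with rfl | hv
  · simp [quadForm_re]
  · have ht : (0 : ℝ) < ‖v‖ := norm_pos_iff.mpr hv
    set w : ℝ × ℝ := ‖v‖⁻¹ • v with hw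
    have hwnorm : ‖w‖ = 1 := by
      rw [hw, norm_smul, norm_inv, norm_norm, inv_mul_cancel₀ ht.ne']
    have hwmem : w ∈ Metric.sphere (0 : ℝ × ℝ) 1 := by
      simpa [mem_sphere_zero_iff_norm] using hwnorm
    have hkey : (quadForm A v).re = ‖v‖ ^ 2 * (quadForm A w).re := by
      have hw1 : w.1 = ‖v‖⁻¹ * v.1 := rfl
      have hw2 : w.2 = ‖v‖⁻¹ * v.2 := rfl
      rw [quadForm_re, quadForm_re, hw1, hw2]
      field_simp
    rw [hkey]
    have := hmin hwmem
    calc (quadForm A v0).re * ‖v‖ ^ 2 ≤ (quadForm A w).re * ‖v‖ ^ 2 :=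
          mul_le_mul_of_nonneg_right this (by positivity)
      _ = ‖v‖ ^ 2 * (quadForm A w).re := by ring

lemma cpow_norm_le {z : ℂ} (hz : 0 < z.re) (s : ℂ) :
    ‖z ^ (-s)‖ ≤ ‖z‖ ^ (-s.re) * Real.exp (Real.pi / 2 * |s.im|) := by
  have hz0 : z ≠ 0 := by
    intro h; rw [h] at hz; simp at hz
  rw [Complex.norm_cpow_of_ne_zero hz0]
  simp only [Complex.neg_re, Complex.neg_im]
  rw [div_eq_mul_inv, ← Real.exp_neg]
  apply mul_le_mul_of_nonneg_left _ (Real.rpow_nonneg (norm_nonneg z) _)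
  apply Real.exp_le_exp.mpr
  have harg : |Complex.arg z| ≤ Real.pi / 2 := Complex.abs_arg_le_pi_div_two_iff.mpr hz.le
  calc -(Complex.arg z * -s.im) = Complex.arg z * s.im := by ring
    _ ≤ |Complex.arg z * s.im| := le_abs_self _
    _ = |Complex.arg z| * |s.im| := abs_mul _ _
    _ ≤ Real.pi / 2 * |s.im| := mul_le_mul_of_nonneg_right harg (abs_nonneg _)

lemma latvec_ne_zero {j : ℤ × ℤ} (hj : j ≠ 0) : ((j.1 : ℝ), (j.2 : ℝ)) ≠ (0 : ℝ × ℝ) := by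
  intro h
  apply hj
  have h1 : (j.1 : ℝ) = 0 := congrArg Prod.fst h
  have h2 : (j.2 : ℝ) = 0 := congrArg Prod.snd h
  exact Prod.ext (by exact_mod_cast h1) (by exact_mod_cast h2)

lemma latvec_one_le {j : ℤ × ℤ} (hj : j ≠ 0) : 1 ≤ ‖((j.1 : ℝ), (j.2 : ℝ))‖ := by
  rw [Prod.norm_def]
  have : j.1 ≠ 0 ∨ j.2 ≠ 0 := by
    by_contra h
    push_neg at h
    exact hj (Prod.ext h.1 h.2)
  rcases this with h | h
  · apply le_max_of_le_left
    show (1:ℝ) ≤ ‖(j.1:ℝ)‖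
    rw [Real.norm_eq_abs, ← Int.cast_abs]
    exact_mod_cast Int.one_le_abs h
  · apply le_max_of_le_right
    show (1:ℝ) ≤ ‖(j.2:ℝ)‖
    rw [Real.norm_eq_abs, ← Int.cast_abs]
    exact_mod_cast Int.one_le_abs h

/-- Key term-wise bound. -/
lemma term_bound (A : Matrix (Fin 2) (Fin 2) ℂ) (hsym : A.IsSymm) (hpd : (reMat A).PosDef)
    {c : ℝ} (hc : 0 < c) (hcoer : ∀ v : ℝ × ℝ, c * ‖v‖ ^ 2 ≤ (quadForm A v).re)
    {j : ℤ × ℤ} (hj : j ≠ 0) {s : ℂ} {a b M : ℝ} (ha : 0 < a) (has : a ≤ s.re)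
    (hsb : s.re ≤ b) (hM : |s.im| ≤ M) :
    ‖quadFormZ A j ^ (-s)‖ ≤
      (c ^ (-a) + c ^ (-b)) * Real.exp (Real.pi / 2 * M) *
        ‖((j.1 : ℝ), (j.2 : ℝ))‖ ^ (-(2 * a)) := by
  set v : ℝ × ℝ := ((j.1 : ℝ), (j.2 : ℝ)) with hv
  have hvne : v ≠ 0 := latvec_ne_zero hj
  have hv1 : 1 ≤ ‖v‖ := latvec_one_le hj
  have hvpos : (0 : ℝ) < ‖v‖ := lt_of_lt_of_le one_pos hv1
  have hre : 0 < (quadFormZ A j).re := quadForm_re_pos A hsym hpd hvne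
  have habs : c * ‖v‖ ^ 2 ≤ ‖quadFormZ A j‖ :=
    (hcoer v).trans (Complex.re_le_norm _)
  have hcv : (0 : ℝ) < c * ‖v‖ ^ 2 := by positivity
  have h1 : ‖quadFormZ A j ^ (-s)‖ ≤
      ‖quadFormZ A j‖ ^ (-s.re) * Real.exp (Real.pi / 2 * |s.im|) :=
    cpow_norm_le hre s
  have h2 : ‖quadFormZ A j‖ ^ (-s.re) ≤ (c * ‖v‖ ^ 2) ^ (-s.re) :=
    Real.rpow_le_rpow_of_nonpos hcv habs (by linarith)
  have h3 : (c * ‖v‖ ^ 2) ^ (-s.re) = c ^ (-s.re) * (‖v‖ ^ 2) ^ (-s.re) :=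
    Real.mul_rpow hc.le (by positivity)
  have h4 : c ^ (-s.re) ≤ c ^ (-a) + c ^ (-b) := by
    rcases le_total 1 c with h | h
    · have : c ^ (-s.re) ≤ c ^ (-a) := Real.rpow_le_rpow_of_exponent_le h (by linarith)
      have hb : (0 : ℝ) ≤ c ^ (-b) := Real.rpow_nonneg hc.le _
      linarith
    · have : c ^ (-s.re) ≤ c ^ (-b) := Real.rpow_le_rpow_of_exponent_ge hc h (by linarith)
      have hb : (0 : ℝ) ≤ c ^ (-a) := Real.rpow_nonneg hc.le _
      linarith
  have h5 : (‖v‖ ^ 2) ^ (-s.re) ≤ ‖v‖ ^ (-(2 * a)) := by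
    rw [← Real.rpow_natCast ‖v‖ 2, ← Real.rpow_mul (norm_nonneg v)]
    apply Real.rpow_le_rpow_of_exponent_le hv1
    push_cast
    nlinarith
  have h6 : Real.exp (Real.pi / 2 * |s.im|) ≤ Real.exp (Real.pi / 2 * M) :=
    Real.exp_le_exp.mpr (mul_le_mul_of_nonneg_left hM (by positivity))
  calc ‖quadFormZ A j ^ (-s)‖
      ≤ ‖quadFormZ A j‖ ^ (-s.re) * Real.exp (Real.pi / 2 * |s.im|) := h1
    _ ≤ (c * ‖v‖ ^ 2) ^ (-s.re) * Real.exp (Real.pi / 2 * M) := by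
        apply mul_le_mul h2 h6 (Real.exp_nonneg _) (Real.rpow_nonneg hcv.le _)
    _ = c ^ (-s.re) * (‖v‖ ^ 2) ^ (-s.re) * Real.exp (Real.pi / 2 * M) := by rw [h3]
    _ ≤ (c ^ (-a) + c ^ (-b)) * ‖v‖ ^ (-(2 * a)) * Real.exp (Real.pi / 2 * M) := by
        apply mul_le_mul_of_nonneg_right _ (Real.exp_nonneg _)
        exact mul_le_mul h4 h5 (Real.rpow_nonneg (by positivity) _)
          (by positivity)
    _ = (c ^ (-a) + c ^ (-b)) * Real.exp (Real.pi / 2 * M) * ‖v‖ ^ (-(2 * a)) := by ring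

/-- For a complex symmetric `2×2` matrix `A` with positive definite real part, the Epstein
zeta series `Z_A(s) = ∑_{j ∈ ℤ², j ≠ 0} Q_A(j)^{-s}` is absolutely summable for `Re s > 1`,
and defines an analytic (complex differentiable) function of `s` on `{Re s > 1}`. -/
theorem epstein_zeta_summable_and_analytic
    (A : Matrix (Fin 2) (Fin 2) ℂ) (hsym : A.IsSymm) (hpd : (reMat A).PosDef) :
    (∀ s : ℂ, 1 < s.re →
      Summable (fun j : {j : ℤ × ℤ // j ≠ 0} => ‖quadFormZ A j.1 ^ (-s)‖)) ∧
    DifferentiableOn ℂ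
      (fun s : ℂ => ∑' j : {j : ℤ × ℤ // j ≠ 0}, quadFormZ A j.1 ^ (-s))
      {s : ℂ | 1 < s.re} := by
  obtain ⟨c, hc, hcoer⟩ := coercive A hsym hpd
  constructor
  · intro s hs
    have hsum : Summable fun j : {j : ℤ × ℤ // j ≠ 0} =>
        (c ^ (-s.re) + c ^ (-s.re)) * Real.exp (Real.pi / 2 * |s.im|) *
          ‖((j.1.1 : ℝ), (j.1.2 : ℝ))‖ ^ (-(2 * s.re)) := by
      apply Summable.mul_left
      exact ((lat_summable (by linarith)).subtype _).congr fun j => rfl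
    apply hsum.of_nonneg_of_le (fun j => norm_nonneg _)
    intro j
    exact term_bound A hsym hpd hc hcoer j.2 (by linarith) le_rfl le_rfl le_rfl
  · intro s₀ hs₀
    simp only [Set.mem_setOf_eq] at hs₀
    set a : ℝ := (1 + s₀.re) / 2 with hadef
    set b : ℝ := s₀.re + 1 with hbdef
    set M : ℝ := |s₀.im| + 1 with hMdef
    have ha1 : 1 < a := by rw [hadef]; linarith
    set V : Set ℂ := Complex.re ⁻¹' Set.Ioo a b ∩ Complex.im ⁻¹' Set.Ioo (s₀.im - 1) (s₀.im + 1)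
      with hVdef
    have hVopen : IsOpen V :=
      (isOpen_Ioo.preimage Complex.continuous_re).inter
        (isOpen_Ioo.preimage Complex.continuous_im)
    have hs₀V : s₀ ∈ V := by
      constructor
      · exact ⟨by rw [hadef]; linarith, by rw [hbdef]; linarith⟩
      · exact ⟨by linarith, by linarith⟩
    have hdiff : DifferentiableOn ℂ
        (fun s : ℂ => ∑' j : {j : ℤ × ℤ // j ≠ 0}, quadFormZ A j.1 ^ (-s)) V := by
      apply differentiableOn_tsum_of_summable_norm
        (u := fun j : {j : ℤ × ℤ // j ≠ 0} =>
          (c ^ (-a) + c ^ (-b)) * Real.exp (Real.pi / 2 * M) *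
            ‖((j.1.1 : ℝ), (j.1.2 : ℝ))‖ ^ (-(2 * a)))
      · apply Summable.mul_left
        exact ((lat_summable (by linarith)).subtype _).congr fun j => rfl
      · intro j
        have hQ : quadFormZ A j.1 ≠ 0 := by
          intro h
          have := quadForm_re_pos A hsym hpd (latvec_ne_zero j.2)
          rw [show quadForm A ((j.1.1 : ℝ), (j.1.2 : ℝ)) = quadFormZ A j.1 from rfl, h] at this
          simp at this
        exact (differentiable_neg.const_cpow (Or.inl hQ)).differentiableOn
      · exact hVopen
      · intro j w hw
        obtain ⟨⟨hw1, hw2⟩, hw3, hw4⟩ := hw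
        have hMw : |w.im| ≤ M := by
          rw [abs_le]
          constructor
          · have := neg_abs_le s₀.im; rw [hMdef]; linarith
          · have := le_abs_self s₀.im; rw [hMdef]; linarith
        exact term_bound A hsym hpd hc hcoer j.2 (by linarith) hw1.le hw2.le hMw
    exact (hdiff.differentiableAt (hVopen.mem_nhds hs₀V)).differentiableWithinAt
end
end

section
/- Let A be an invertible 2×2 complex symmetric matrix such that both Re(A) and Re(A^{-1}) are positive definite. Then for every real t > 0, ∑_{j∈ℤ²} e^{−π t Q_A(j)} = (1/(t √(det A))) ∑_{j∈ℤ²} e^{−π Q_{A^{-1}}(j)/t}, where √(det A) is the principal square root, and both series converge absolutely. -/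
open Complex MeasureTheory Real

noncomputable section

lemma re_pos_inv {z : ℂ} (hz : 0 < z.re) : 0 < z⁻¹.re := by
  rw [Complex.inv_re]
  exact div_pos hz (Complex.normSq_pos.2 (by intro h; rw [h] at hz; simp at hz))

lemma ne_zero_of_re_pos {z : ℂ} (hz : 0 < z.re) : z ≠ 0 := by
  intro h; rw [h] at hz; simp at hz

lemma sqrt_mul_re_pos {z w : ℂ} (hz : 0 < z.re) (hw : 0 < w.re) :
    (z * w) ^ ((1:ℂ)/2) = z ^ ((1:ℂ)/2) * w ^ ((1:ℂ)/2) := by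
  have hz0 := _root_.ne_zero_of_re_pos hz
  have hw0 := _root_.ne_zero_of_re_pos hw
  have haz : |z.arg| < π / 2 := Complex.abs_arg_lt_pi_div_two_iff.2 (Or.inl hz)
  have haw : |w.arg| < π / 2 := Complex.abs_arg_lt_pi_div_two_iff.2 (Or.inl hw)
  have harg : z.arg + w.arg ∈ Set.Ioc (-π) π := by
    constructor
    · have := abs_lt.1 haz; have := abs_lt.1 haw; linarith [Real.pi_pos]
    · have := abs_lt.1 haz; have := abs_lt.1 haw; linarith [Real.pi_pos]
  rw [Complex.cpow_def_of_ne_zero (mul_ne_zero hz0 hw0), Complex.cpow_def_of_ne_zero hz0,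
    Complex.cpow_def_of_ne_zero hw0, Complex.log_mul hz0 hw0 harg, add_mul, Complex.exp_add]

lemma sqrt_sq_mul {t : ℝ} (ht : 0 < t) {z : ℂ} (hz : z ≠ 0) :
    (((t^2 : ℝ) : ℂ) * z) ^ ((1:ℂ)/2) = (t : ℂ) * z ^ ((1:ℂ)/2) := by
  have ht2 : (0:ℝ) < t^2 := by positivity
  rw [Complex.cpow_def_of_ne_zero (mul_ne_zero (by exact_mod_cast ht2.ne') hz),
    Complex.cpow_def_of_ne_zero hz, mul_comm (((t^2:ℝ)):ℂ) z,
    Complex.log_mul_ofReal _ ht2 _ hz, add_mul, Complex.exp_add]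
  congr 1
  rw [show ((Real.log (t^2) : ℂ)) * ((1:ℂ)/2) = ((Real.log (t^2) / 2 : ℝ) : ℂ) by push_cast; ring]
  rw [← Complex.ofReal_exp]
  congr 1
  rw [Real.log_pow]
  push_cast
  rw [show (2:ℝ) * Real.log t / 2 = Real.log t by ring, Real.exp_log ht]

lemma summable_gauss_int (m : ℝ) (hm : 0 < m) :
    Summable fun n : ℤ => rexp (-m * (n:ℝ) ^ 2) := by
  have h := summable_pow_mul_jacobiTheta₂_term_bound 0 (show (0:ℝ) < m / π from
    div_pos hm Real.pi_pos) 0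
  refine h.congr fun n => ?_
  rw [pow_zero, one_mul]
  congr 1
  field_simp
  ring

lemma summable_gauss2 (a b c : ℝ) (ha : 0 < a) (hd : 0 < a * c - b * b) :
    Summable fun j : ℤ × ℤ =>
      rexp (-(a * (j.1:ℝ) ^ 2 + 2 * b * (j.1:ℝ) * (j.2:ℝ) + c * (j.2:ℝ) ^ 2)) := by
  have hc : 0 < c := by nlinarith [sq_nonneg b]
  set m := (a * c - b * b) / (a + c) with hm_def
  have hm : 0 < m := div_pos hd (by linarith)
  have hsum : Summable fun j : ℤ × ℤ =>
      rexp (-m * (j.1:ℝ) ^ 2) * rexp (-m * (j.2:ℝ) ^ 2) :=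
    (summable_gauss_int m hm).mul_of_nonneg (summable_gauss_int m hm)
      (fun _ => (Real.exp_pos _).le) (fun _ => (Real.exp_pos _).le)
  refine hsum.of_nonneg_of_le (fun _ => (Real.exp_pos _).le) fun j => ?_
  rw [← Real.exp_add]
  apply Real.exp_le_exp.2
  have key : m * ((j.1:ℝ)^2 + (j.2:ℝ)^2) ≤
      a * (j.1:ℝ) ^ 2 + 2 * b * (j.1:ℝ) * (j.2:ℝ) + c * (j.2:ℝ) ^ 2 := by
    rw [hm_def, div_mul_eq_mul_div, div_le_iff₀ (by linarith : (0:ℝ) < a + c)]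
    nlinarith [sq_nonneg (a * (j.1:ℝ) + b * (j.2:ℝ)), sq_nonneg (b * (j.1:ℝ) + c * (j.2:ℝ))]
  linarith

lemma re_quad (E F G : ℂ) (x y : ℝ) :
    (E * (x:ℂ)^2 + 2*F*(x:ℂ)*(y:ℂ) + G*(y:ℂ)^2).re
      = E.re * x^2 + 2*F.re*x*y + G.re*y^2 := by
  simp [Complex.add_re, Complex.mul_re, Complex.mul_im, pow_two]

lemma norm_cexp (z : ℂ) : ‖Complex.exp z‖ = rexp z.re := by
  rw [Complex.norm_exp]

lemma key2 (E F G : ℂ) (hG : G ≠ 0) :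
    (((E*G - F^2)/G).re * G⁻¹.re - ((F/G).im)^2) * Complex.normSq G
      = E.re * G.re - F.re * F.re := by
  have h : Complex.normSq G ≠ 0 := (Complex.normSq_pos.2 hG).ne'
  rw [Complex.div_re, Complex.div_im, Complex.inv_re]
  simp only [Complex.sub_re, Complex.sub_im, Complex.mul_re, Complex.mul_im, pow_two,
    Complex.normSq_apply] at *
  have h' : G.re^2 + G.im^2 ≠ 0 := by rw [pow_two, pow_two]; exact h
  field_simp
  ring

lemma Isq_helper (N z : ℂ) : (N + Complex.I*z)^2 = N^2 + 2*Complex.I*z*N - z^2 := by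
  rw [add_sq, mul_pow, Complex.I_sq]; ring

lemma posdef_facts (M : Matrix (Fin 2) (Fin 2) ℝ) (hM : M.PosDef) :
    0 < M 0 0 ∧ 0 < M 1 1 ∧ 0 < M 0 0 * M 1 1 - M 0 1 * M 1 0 := by
  refine ⟨?_, ?_, ?_⟩
  · have := hM.dotProduct_mulVec_pos (x := ![1,0]) (by intro h; exact one_ne_zero (congrFun h 0))
    simpa [Matrix.mulVec, dotProduct, Fin.sum_univ_two] using this
  · have := hM.dotProduct_mulVec_pos (x := ![0,1]) (by intro h; exact one_ne_zero (congrFun h 1))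
    simpa [Matrix.mulVec, dotProduct, Fin.sum_univ_two] using this
  · have := hM.det_pos
    rwa [Matrix.det_fin_two] at this

/-- Theta transformation (Poisson summation) for an invertible complex symmetric `2×2`
matrix `A` with `Re A` and `Re A⁻¹` positive definite: for every `t > 0`,
`∑_{j∈ℤ²} e^{-π t Q_A(j)} = (1/(t √(det A))) ∑_{j∈ℤ²} e^{-π Q_{A⁻¹}(j)/t}`,
both series being absolutely convergent. -/
theorem theta_transformation
    (A : Matrix (Fin 2) (Fin 2) ℂ) (hsym : A.IsSymm) (hdet : A.det ≠ 0)
    (hpd : (reMat A).PosDef) (hpdinv : (reMat A⁻¹).PosDef) :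
    ∀ t : ℝ, 0 < t →
      Summable (fun j : ℤ × ℤ => ‖Complex.exp (-(π : ℂ) * t * quadFormZ A j)‖) ∧
      Summable (fun j : ℤ × ℤ => ‖Complex.exp (-(π : ℂ) * quadFormZ A⁻¹ j / t)‖) ∧
      (∑' j : ℤ × ℤ, Complex.exp (-(π : ℂ) * t * quadFormZ A j)) =
        1 / ((t : ℂ) * A.det ^ ((1 : ℂ) / 2)) *
          ∑' j : ℤ × ℤ, Complex.exp (-(π : ℂ) * quadFormZ A⁻¹ j / t) := by
  intro t ht
  have ht0 : (t:ℂ) ≠ 0 := by exact_mod_cast ht.ne'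
  set E := A 0 0 with hE_def
  set F := A 0 1 with hF_def
  set G := A 1 1 with hG_def
  set D := A.det with hD_def
  have hF10 : A 1 0 = F := hsym.apply 0 1
  have hDdef : D = E * G - F^2 := by
    rw [hD_def, Matrix.det_fin_two, hF10]; ring
  -- positivity facts from Re A
  obtain ⟨hE, hG, hdet1⟩ := posdef_facts _ hpd
  rw [show reMat A 0 0 = E.re from rfl] at hE
  rw [show reMat A 1 1 = G.re from rfl] at hG
  rw [show reMat A 0 0 = E.re from rfl, show reMat A 1 1 = G.re from rfl,
    show reMat A 0 1 = F.re from rfl, show reMat A 1 0 = F.re by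
    show (A 1 0).re = F.re; rw [hF10]] at hdet1
  have hG0 : G ≠ 0 := _root_.ne_zero_of_re_pos hG
  have hE0 : E ≠ 0 := _root_.ne_zero_of_re_pos hE
  -- inverse entries
  have hInv : A⁻¹ = Matrix.of ![![G/D, -F/D], ![-F/D, E/D]] := by
    rw [Matrix.inv_def, Matrix.adjugate_fin_two, Ring.inverse_eq_inv, hF10]
    ext i j
    fin_cases i <;> fin_cases j <;>
      simp [Matrix.smul_apply, div_eq_inv_mul, hD_def, hE_def, hF_def, hG_def]
  have hInv00 : A⁻¹ 0 0 = G/D := by rw [hInv]; rfl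
  have hInv01 : A⁻¹ 0 1 = -F/D := by rw [hInv]; rfl
  have hInv10 : A⁻¹ 1 0 = -F/D := by rw [hInv]; rfl
  have hInv11 : A⁻¹ 1 1 = E/D := by rw [hInv]; rfl
  obtain ⟨hGD, hED, hdetinv⟩ := posdef_facts _ hpdinv
  rw [show reMat A⁻¹ 0 0 = (A⁻¹ 0 0).re from rfl, hInv00] at hGD
  rw [show reMat A⁻¹ 1 1 = (A⁻¹ 1 1).re from rfl, hInv11] at hED
  rw [show reMat A⁻¹ 0 0 = (A⁻¹ 0 0).re from rfl, show reMat A⁻¹ 1 1 = (A⁻¹ 1 1).re from rfl,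
      show reMat A⁻¹ 0 1 = (A⁻¹ 0 1).re from rfl,
      show reMat A⁻¹ 1 0 = (A⁻¹ 1 0).re from rfl, hInv00, hInv11, hInv01, hInv10] at hdetinv
  have hDG : 0 < (D/G).re := by
    have : D/G = (G/D)⁻¹ := by field_simp
    rw [this]; exact re_pos_inv hGD
  -- middle positivity
  have hmid : 0 < (D/G).re * G⁻¹.re - ((F/G).im)^2 := by
    have h2 := key2 E F G hG0
    rw [← hDdef] at h2
    have hnsq : (0:ℝ) < Complex.normSq G := Complex.normSq_pos.2 hG0
    have hX : (D/G).re * G⁻¹.re - ((F/G).im)^2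
        = (E.re * G.re - F.re * F.re) / Complex.normSq G := by
      rw [eq_div_iff hnsq.ne']; exact h2
    rw [hX]; exact div_pos hdet1 hnsq
  -- Summability 1
  have S1 : Summable (fun j : ℤ × ℤ => ‖Complex.exp (-(π : ℂ) * t * quadFormZ A j)‖) := by
    have heq : ∀ j : ℤ × ℤ, ‖Complex.exp (-(π : ℂ) * t * quadFormZ A j)‖
        = rexp (-((π*t*E.re) * (j.1:ℝ)^2 + 2*(π*t*F.re)*(j.1:ℝ)*(j.2:ℝ)
            + (π*t*G.re)*(j.2:ℝ)^2)) := by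
      intro j
      rw [norm_cexp]
      congr 1
      rw [show -(π:ℂ) * t * quadFormZ A j = ((-(π*t):ℝ):ℂ) * quadFormZ A j by push_cast; ring,
        Complex.re_ofReal_mul, quadFormZ, quadForm, re_quad]
      ring
    rw [funext heq]
    apply summable_gauss2
    · positivity
    · have : π*t*E.re * (π*t*G.re) - (π*t*F.re)*(π*t*F.re)
          = (π*t)^2 * (E.re*G.re - F.re*F.re) := by ring
      rw [this]
      exact mul_pos (by positivity) hdet1
  -- Summability 2
  have S2 : Summable (fun j : ℤ × ℤ => ‖Complex.exp (-(π : ℂ) * quadFormZ A⁻¹ j / t)‖) := by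
    have heq : ∀ j : ℤ × ℤ, ‖Complex.exp (-(π : ℂ) * quadFormZ A⁻¹ j / t)‖
        = rexp (-((π/t*(G/D).re) * (j.1:ℝ)^2 + 2*(π/t*(-F/D).re)*(j.1:ℝ)*(j.2:ℝ)
            + (π/t*(E/D).re)*(j.2:ℝ)^2)) := by
      intro j
      rw [norm_cexp]
      congr 1
      rw [show -(π:ℂ) * quadFormZ A⁻¹ j / t = ((-(π/t):ℝ):ℂ) * quadFormZ A⁻¹ j by
          push_cast; field_simp,
        Complex.re_ofReal_mul, quadFormZ, quadForm, hInv00, hInv01, hInv11, re_quad]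
      ring
    rw [funext heq]
    apply summable_gauss2
    · positivity
    · have : π/t*(G/D).re * (π/t*(E/D).re) - (π/t*(-F/D).re)*(π/t*(-F/D).re)
          = (π/t)^2 * ((G/D).re*(E/D).re - (-F/D).re*(-F/D).re) := by ring
      rw [this]
      exact mul_pos (by positivity) hdetinv
  refine ⟨S1, S2, ?_⟩
  have hg : Summable (fun j : ℤ × ℤ => Complex.exp (-(π : ℂ) * t * quadFormZ A j)) :=
    S1.of_norm
  have hq : Summable (fun j : ℤ × ℤ => Complex.exp (-(π : ℂ) * quadFormZ A⁻¹ j / t)) :=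
    S2.of_norm
  set g : ℤ × ℤ → ℂ := fun j => Complex.exp (-(π : ℂ) * t * quadFormZ A j) with hg_def
  set q : ℤ × ℤ → ℂ := fun j => Complex.exp (-(π : ℂ) * quadFormZ A⁻¹ j / t) with hq_def
  set h : ℤ → ℤ → ℂ := fun x k =>
    Complex.exp (-(π:ℂ) * ((t:ℂ)*(D/G)) * (x:ℂ)^2 + 2*(π:ℂ)*(Complex.I*F*(k:ℂ)/G)*(x:ℂ))
      * Complex.exp (-(π:ℂ)*(k:ℂ)^2/((t:ℂ)*G)) with hh_def
  have htG : 0 < ((t:ℂ)*G).re := by rw [Complex.re_ofReal_mul]; exact mul_pos ht hG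
  have htDG : 0 < ((t:ℂ)*(D/G)).re := by rw [Complex.re_ofReal_mul]; exact mul_pos ht hDG
  have hD2 : E*G - F^2 ≠ 0 := by rw [← hDdef]; exact hdet
  -- step 2 : inner transform in y
  have step2 : ∀ x : ℤ, (∑' y : ℤ, g (x, y))
      = 1/((t:ℂ)*G) ^ ((1:ℂ)/2) * ∑' k : ℤ, h x k := by
    intro x
    have expand : ∀ y : ℤ, g (x, y)
        = Complex.exp (-(π:ℂ) * ((t:ℂ)*G) * (y:ℂ)^2 + 2*(π:ℂ)*(-(t:ℂ)*F*(x:ℂ))*(y:ℂ))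
          * Complex.exp (-(π:ℂ)*(t:ℂ)*E*(x:ℂ)^2) := by
      intro y
      simp only [hg_def]
      rw [← Complex.exp_add]
      congr 1
      simp only [quadFormZ, quadForm, ← hE_def, ← hF_def, ← hG_def]
      push_cast
      ring
    have key : ∀ n : ℤ,
        Complex.exp (-(π:ℂ)/((t:ℂ)*G) * ((n:ℂ) + Complex.I*(-(t:ℂ)*F*(x:ℂ)))^2)
          * Complex.exp (-(π:ℂ)*(t:ℂ)*E*(x:ℂ)^2) = h x n := by
      intro n
      simp only [hh_def]
      rw [← Complex.exp_add, ← Complex.exp_add]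
      congr 1
      rw [hDdef, Isq_helper]
      field_simp
      ring
    rw [tsum_congr expand, tsum_mul_right,
      Complex.tsum_exp_neg_quadratic htG (-(t:ℂ)*F*(x:ℂ)), mul_assoc, ← tsum_mul_right,
      tsum_congr key]
  -- step 5 : inner transform in x
  have step5 : ∀ k : ℤ, (∑' x : ℤ, h x k)
      = 1/((t:ℂ)*(D/G)) ^ ((1:ℂ)/2) * ∑' m : ℤ, q (m, k) := by
    intro k
    have key : ∀ m : ℤ,
        Complex.exp (-(π:ℂ)/((t:ℂ)*(D/G)) * ((m:ℂ) + Complex.I*(Complex.I*F*(k:ℂ)/G))^2)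
          * Complex.exp (-(π:ℂ)*(k:ℂ)^2/((t:ℂ)*G)) = q (m, k) := by
      intro m
      simp only [hq_def]
      rw [← Complex.exp_add]
      congr 1
      simp only [quadFormZ, quadForm, hInv00, hInv01, hInv11]
      rw [show Complex.I*(Complex.I*F*(k:ℂ)/G) = -(F*(k:ℂ)/G) by
        rw [show Complex.I*(Complex.I*F*(k:ℂ)/G) = Complex.I^2*(F*(k:ℂ)/G) by ring,
          Complex.I_sq]; ring]
      rw [hDdef]
      push_cast
      field_simp
      ring
    simp only [hh_def]
    rw [tsum_mul_right, Complex.tsum_exp_neg_quadratic htDG (Complex.I*F*(k:ℂ)/G),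
      mul_assoc, ← tsum_mul_right, tsum_congr key]
  -- middle summability
  have hterm : ∀ x k : ℤ, h x k
      = Complex.exp ((((-(π*t*(x:ℝ)^2)):ℝ):ℂ)*(D/G)
          + (((2*π*(x:ℝ)*(k:ℝ)):ℝ):ℂ)*(Complex.I*(F/G))
          + (((-(π*(k:ℝ)^2/t)):ℝ):ℂ)*G⁻¹) := by
    intro x k
    simp only [hh_def]
    rw [← Complex.exp_add]
    congr 1
    push_cast
    field_simp
  have Hmid : Summable (Function.uncurry h) := by
    apply Summable.of_norm
    have heq : ∀ p : ℤ × ℤ, ‖Function.uncurry h p‖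
        = rexp (-((π*t*(D/G).re) * (p.1:ℝ)^2 + 2*(π*(F/G).im)*(p.1:ℝ)*(p.2:ℝ)
            + (π/t*G⁻¹.re)*(p.2:ℝ)^2)) := by
      intro p
      simp only [Function.uncurry]
      rw [hterm p.1 p.2, norm_cexp]
      congr 1
      simp only [Complex.add_re, Complex.re_ofReal_mul, Complex.I_mul_re]
      ring
    rw [funext heq]
    apply summable_gauss2
    · exact mul_pos (mul_pos Real.pi_pos ht) hDG
    · have e : (π*t*(D/G).re) * (π/t*G⁻¹.re) - (π*(F/G).im)*(π*(F/G).im)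
          = π^2 * ((D/G).re * G⁻¹.re - ((F/G).im)^2) := by
        field_simp
      rw [e]
      exact mul_pos (by positivity) hmid
  have hq2 : Summable (Function.uncurry (fun m k : ℤ => q (m, k))) := by
    have e : (Function.uncurry (fun m k : ℤ => q (m, k))) = q := by
      funext p
      simp [Function.uncurry]
    rw [e]
    exact hq
  have hpre : ((t:ℂ)*G) ^ ((1:ℂ)/2) * ((t:ℂ)*(D/G)) ^ ((1:ℂ)/2) = (t:ℂ) * D ^ ((1:ℂ)/2) := by
    rw [← sqrt_mul_re_pos htG htDG,
      show ((t:ℂ)*G) * ((t:ℂ)*(D/G)) = ((t^2:ℝ):ℂ) * D by push_cast; field_simp]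
    exact sqrt_sq_mul ht hdet
  calc (∑' j : ℤ × ℤ, g j)
      = ∑' x : ℤ, ∑' y : ℤ, g (x, y) := Summable.tsum_prod hg
    _ = ∑' x : ℤ, (1/((t:ℂ)*G) ^ ((1:ℂ)/2) * ∑' k : ℤ, h x k) := tsum_congr step2
    _ = 1/((t:ℂ)*G) ^ ((1:ℂ)/2) * ∑' x : ℤ, ∑' k : ℤ, h x k := tsum_mul_left
    _ = 1/((t:ℂ)*G) ^ ((1:ℂ)/2) * ∑' k : ℤ, ∑' x : ℤ, h x k := by rw [← Summable.tsum_comm Hmid]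
    _ = 1/((t:ℂ)*G) ^ ((1:ℂ)/2)
        * ∑' k : ℤ, (1/((t:ℂ)*(D/G)) ^ ((1:ℂ)/2) * ∑' m : ℤ, q (m, k)) := by
        rw [tsum_congr step5]
    _ = 1/((t:ℂ)*G) ^ ((1:ℂ)/2)
        * (1/((t:ℂ)*(D/G)) ^ ((1:ℂ)/2) * ∑' k : ℤ, ∑' m : ℤ, q (m, k)) := by
        rw [tsum_mul_left]
    _ = 1/((t:ℂ)*G) ^ ((1:ℂ)/2)
        * (1/((t:ℂ)*(D/G)) ^ ((1:ℂ)/2) * ∑' m : ℤ, ∑' k : ℤ, q (m, k)) := by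
        rw [Summable.tsum_comm hq2]
    _ = 1/((t:ℂ)*G) ^ ((1:ℂ)/2)
        * (1/((t:ℂ)*(D/G)) ^ ((1:ℂ)/2) * ∑' j : ℤ × ℤ, q j) := by
        rw [← Summable.tsum_prod hq]
    _ = 1 / ((t:ℂ) * D ^ ((1:ℂ)/2)) * ∑' j : ℤ × ℤ, q j := by
        rw [← hpre]; ring
end
end

section
/- Let A be a 2×2 complex symmetric matrix with Re(A) positive definite, and set Ω = { x ∈ ℝ² : |Q_A(x)| ≤ 1 } (a compact neighborhood of the origin). Define I₁(s) = ∫_Ω Q_A(x)^{−s} dx for Re(s) < 1 and I₂(s) = ∫_{ℝ²∖Ω} Q_A(x)^{−s} dx for Re(s) > 1; both integrals converge absolutely on the stated ranges. Then there exists a function G analytic on ℂ∖{1} such that G(s) = I₁(s) whenever Re(s) < 1 and G(s) = −I₂(s) whenever Re(s) > 1. -/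
open Complex MeasureTheory

noncomputable section

open Set Real

namespace QFAux

variable (A : Matrix (Fin 2) (Fin 2) ℂ)

lemma continuous_quadForm : Continuous (quadForm A) := by
  unfold quadForm; fun_prop

lemma quad_smul (r : ℝ) (v : ℝ × ℝ) :
    quadForm A (r * v.1, r * v.2) = ((r : ℂ))^2 * quadForm A v := by
  simp only [quadForm]; push_cast; ring

variable {A}

lemma re_pos (hsym : A.IsSymm) (hpd : (reMat A).PosDef) (v : ℝ × ℝ) (hv : v ≠ 0) :
    0 < (quadForm A v).re := by
  have h10 : A 1 0 = A 0 1 := by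
    have h := hsym; rw [Matrix.IsSymm] at h
    exact congrFun (congrFun h 0) 1
  have hx : ![v.1, v.2] ≠ 0 := by
    intro h
    apply hv
    have h1 := congrFun h 0
    have h2 := congrFun h 1
    simp at h1 h2
    exact Prod.ext h1 h2
  have hq := hpd.dotProduct_mulVec_pos hx
  have hrw : quadForm A v = ((v.1^2 : ℝ) : ℂ) * A 0 0 + ((2*v.1*v.2 : ℝ) : ℂ) * A 0 1
      + ((v.2^2 : ℝ) : ℂ) * A 1 1 := by
    unfold quadForm; push_cast; ring
  rw [hrw]
  simp only [Complex.add_re, Complex.re_ofReal_mul]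
  simp only [dotProduct, Matrix.mulVec, Fin.sum_univ_two, star_trivial, reMat,
    Matrix.map_apply, Matrix.cons_val_zero, Matrix.cons_val_one, Matrix.head_cons] at hq
  rw [h10] at hq
  nlinarith [hq]

lemma measurable_fs (s : ℂ) : Measurable (fun x : ℝ × ℝ => quadForm A x ^ (-s)) :=
  (continuous_quadForm A).measurable.pow measurable_const

lemma cpow_ofReal_pos {b : ℝ} (hb : 0 < b) (w : ℂ) :
    (b : ℂ) ^ w = Complex.exp (w * (Real.log b : ℂ)) := by
  rw [Complex.cpow_def_of_ne_zero (by exact_mod_cast hb.ne'), Complex.ofReal_log hb.le, mul_comm]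

lemma ofReal_mul_cpow {b : ℝ} (hb : 0 < b) {z : ℂ} (hz : z ≠ 0) (w : ℂ) :
    ((b : ℂ) * z) ^ w = (b : ℂ) ^ w * z ^ w := by
  rw [Complex.cpow_def_of_ne_zero (mul_ne_zero (by exact_mod_cast hb.ne') hz),
    Complex.log_ofReal_mul hb hz, add_mul, Complex.exp_add, cpow_ofReal_pos hb,
    Complex.cpow_def_of_ne_zero hz, mul_comm ((Real.log b : ℂ)) w]




lemma polarCoord_symm_fun :
    (⇑polarCoord.symm : ℝ × ℝ → ℝ × ℝ) = fun p => (p.1 * Real.cos p.2, p.1 * Real.sin p.2) := by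
  funext p; exact polarCoord_symm_apply p

lemma continuous_polarCoord_symm : Continuous (⇑polarCoord.symm : ℝ × ℝ → ℝ × ℝ) := by
  rw [polarCoord_symm_fun]; fun_prop

lemma snd_zero_null : volume {p : ℝ × ℝ | p.2 = 0} = 0 := by
  have h : {p : ℝ × ℝ | p.2 = 0} = (univ : Set ℝ) ×ˢ ({0} : Set ℝ) := by
    ext p
    simp only [mem_setOf_eq, Set.mem_prod, mem_univ, mem_singleton_iff, true_and]
  rw [h, Measure.volume_eq_prod, Measure.prod_prod]
  simp

lemma source_inter_ae (W : Set (ℝ × ℝ)) :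
    (polarCoord.source ∩ W : Set (ℝ × ℝ)) =ᵐ[volume] W := by
  rw [MeasureTheory.ae_eq_set]
  constructor
  · exact measure_mono_null (fun x hx => (hx.2 hx.1.2).elim) (measure_empty (μ := volume))
  · refine measure_mono_null (fun x hx => ?_) snd_zero_null
    have hsrc := hx.2
    simp only [mem_inter_iff, not_and] at hsrc
    have : x ∉ polarCoord.source := fun h => hsrc h hx.1
    rw [polarCoord_source] at this
    simp only [mem_union, mem_setOf_eq, not_or, not_lt] at this
    exact not_not.mp this.2

lemma polar_transfer (W : Set (ℝ × ℝ)) (hW : MeasurableSet W) (f : ℝ × ℝ → ℂ) :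
    (IntegrableOn f W ↔ IntegrableOn (fun p => p.1 • f (polarCoord.symm p))
      (polarCoord.target ∩ ⇑polarCoord.symm ⁻¹' W)) ∧
    ∫ x in W, f x = ∫ p in polarCoord.target ∩ ⇑polarCoord.symm ⁻¹' W,
      p.1 • f (polarCoord.symm p) := by
  set S := polarCoord.target ∩ ⇑polarCoord.symm ⁻¹' W with hSdef
  set Bm : ℝ × ℝ → (ℝ × ℝ) →L[ℝ] (ℝ × ℝ) := fun p =>
    LinearMap.toContinuousLinearMap (Matrix.toLin (Module.Basis.finTwoProd ℝ) (Module.Basis.finTwoProd ℝ)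
      !![Real.cos p.2, -p.1 * Real.sin p.2; Real.sin p.2, p.1 * Real.cos p.2]) with hBm
  have hder : ∀ p ∈ S, HasFDerivWithinAt (⇑polarCoord.symm) (Bm p) S p := fun p _ =>
    (hasFDerivAt_polarCoord_symm p).hasFDerivWithinAt
  have hdet : ∀ p : ℝ × ℝ, (Bm p).det = p.1 := by
    intro p
    conv_rhs => rw [← one_mul p.1, ← Real.cos_sq_add_sin_sq p.2]
    simp only [hBm, neg_mul, LinearMap.det_toContinuousLinearMap, LinearMap.det_toLin,
      Matrix.det_fin_two_of, sub_neg_eq_add]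
    ring
  have hSmeas : MeasurableSet S :=
    polarCoord.open_target.measurableSet.inter (continuous_polarCoord_symm.measurable hW)
  have himg : ⇑polarCoord.symm '' S = polarCoord.source ∩ W := by
    rw [hSdef, Set.image_inter_preimage]
    congr 1
    have := polarCoord.symm.image_source_eq_target
    rwa [polarCoord.symm_source, polarCoord.symm_target] at this
  have hinj : InjOn (⇑polarCoord.symm) S :=
    polarCoord.symm.injOn.mono (by rw [polarCoord.symm_source]; exact inter_subset_left)
  have haeeq := source_inter_ae W
  constructor
  · rw [IntegrableOn, ← Measure.restrict_congr_set haeeq, ← IntegrableOn, ← himg,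
      integrableOn_image_iff_integrableOn_abs_det_fderiv_smul volume hSmeas hder hinj f]
    exact integrableOn_congr_fun (fun p hp => by rw [hdet p, abs_of_pos hp.1.1]) hSmeas
  · rw [← setIntegral_congr_set haeeq, ← himg,
      integral_image_eq_integral_abs_det_fderiv_smul volume hSmeas hder hinj f]
    exact setIntegral_congr_fun hSmeas (fun p hp => by rw [hdet p, abs_of_pos hp.1.1])

lemma fubini_polar {g : ℝ × ℝ → ℂ} {I : ℝ → Set ℝ} (hI : ∀ θ, MeasurableSet (I θ))
    (hS : MeasurableSet {p : ℝ × ℝ | p.2 ∈ Ioo (-π) π ∧ p.1 ∈ I p.2})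
    (hg : IntegrableOn g {p : ℝ × ℝ | p.2 ∈ Ioo (-π) π ∧ p.1 ∈ I p.2}) :
    ∫ p in {p : ℝ × ℝ | p.2 ∈ Ioo (-π) π ∧ p.1 ∈ I p.2}, g p
      = ∫ θ in Ioo (-π) π, ∫ r in I θ, g (r, θ) := by
  set S := {p : ℝ × ℝ | p.2 ∈ Ioo (-π) π ∧ p.1 ∈ I p.2} with hSdef
  rw [← integral_indicator hS]
  have hint : Integrable (S.indicator g) volume := (integrable_indicator_iff hS).2 hg
  rw [Measure.volume_eq_prod] at hint
  rw [Measure.volume_eq_prod, integral_prod_symm _ hint]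
  rw [← integral_indicator measurableSet_Ioo]
  congr 1
  funext θ
  by_cases hθ : θ ∈ Ioo (-π) π
  · rw [Set.indicator_of_mem hθ, ← integral_indicator (hI θ)]
    congr 1; funext r
    by_cases hr : r ∈ I θ
    · rw [Set.indicator_of_mem (show (r, θ) ∈ S from ⟨hθ, hr⟩), Set.indicator_of_mem hr]
    · rw [Set.indicator_of_notMem (show (r, θ) ∉ S from fun h => hr h.2),
        Set.indicator_of_notMem hr]
  · rw [Set.indicator_of_notMem hθ]
    have h0 : ∀ r : ℝ, S.indicator g (r, θ) = 0 := fun r =>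
      Set.indicator_of_notMem (fun h => hθ h.1) _
    simp [h0]


end QFAux

namespace QFAux

variable (A : Matrix (Fin 2) (Fin 2) ℂ)

def qc (θ : ℝ) : ℂ := quadForm A (Real.cos θ, Real.sin θ)
def aq (θ : ℝ) : ℝ := ‖qc A θ‖
def Rr (θ : ℝ) : ℝ := aq A θ ^ (-(1/2) : ℝ)
def cf (θ : ℝ) : ℂ := ((Real.log (aq A θ) : ℝ) : ℂ) - Complex.log (qc A θ)
def Fm (s : ℂ) (θ : ℝ) : ℂ := Complex.exp (s * cf A θ - ((Real.log (aq A θ) : ℝ) : ℂ))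
def KK (s : ℂ) : ℂ := ∫ θ in Set.Ioo (-π) π, Fm A s θ

lemma hqc_cont : Continuous (qc A) :=
  (continuous_quadForm A).comp (continuous_cos.prodMk continuous_sin)

variable {A}

variable (hre : ∀ θ, 0 < (qc A θ).re)

section repos

include hre in
lemma hqne (θ : ℝ) : qc A θ ≠ 0 := by
  intro h
  have := hre θ
  rw [h] at this
  simp at this

include hre in
lemma haqpos (θ : ℝ) : 0 < aq A θ := by
  unfold aq
  exact norm_pos_iff.mpr (hqne hre θ)

lemma hquadp (r θ : ℝ) :
    quadForm A (polarCoord.symm (r, θ)) = ((r^2 : ℝ) : ℂ) * qc A θ := by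
  rw [polarCoord_symm_apply]
  have h := quad_smul A r (Real.cos θ, Real.sin θ)
  simp only at h ⊢
  unfold qc
  rw [h]
  push_cast
  ring

lemma habs_polar {r : ℝ} (hr : 0 < r) (θ : ℝ) :
    ‖quadForm A (polarCoord.symm (r, θ))‖ = r^2 * aq A θ := by
  rw [hquadp, norm_mul, Complex.norm_real, Real.norm_eq_abs, abs_of_pos (by positivity : (0:ℝ) < r^2)]
  rfl

include hre in
lemma hR2 (θ : ℝ) : Rr A θ ^ 2 = (aq A θ)⁻¹ := by
  rw [Rr, ← Real.rpow_natCast (aq A θ ^ (-(1/2) : ℝ)) 2, ← Real.rpow_mul (haqpos hre θ).le]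
  norm_num [Real.rpow_neg_one]

include hre in
lemma hRpos (θ : ℝ) : 0 < Rr A θ := Real.rpow_pos_of_pos (haqpos hre θ) _

include hre in
lemma hmem_iff {r : ℝ} (hr : 0 < r) (θ : ℝ) :
    ‖quadForm A (polarCoord.symm (r, θ))‖ ≤ 1 ↔ r ≤ Rr A θ := by
  rw [habs_polar hr]
  have h2 := hR2 hre θ
  have h3 := haqpos hre θ
  have h4 := hRpos hre θ
  have h5 : aq A θ * (aq A θ)⁻¹ = 1 := mul_inv_cancel₀ h3.ne'
  constructor
  · intro h; nlinarith
  · intro h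
    have h6 : r^2 ≤ Rr A θ ^ 2 := by nlinarith
    nlinarith [mul_le_mul_of_nonneg_right h6 h3.le]

include hre in
lemma g_eq (s : ℂ) {r : ℝ} (hr : 0 < r) (θ : ℝ) :
    (r : ℝ) • (quadForm A (polarCoord.symm (r, θ))) ^ (-s)
      = (r : ℂ) ^ ((1:ℂ) - 2*s) * (qc A θ) ^ (-s) := by
  rw [hquadp, ofReal_mul_cpow (by positivity) (hqne hre θ), Complex.real_smul]
  have h2 : ((r^2 : ℝ) : ℂ) ^ (-s) * (r:ℂ) = (r:ℂ) ^ ((1:ℂ) - 2*s) := by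
    rw [cpow_ofReal_pos (by positivity), cpow_ofReal_pos hr, Real.log_pow]
    rw [show (r:ℂ) = Complex.exp ((Real.log r : ℝ) : ℂ) by
      rw [← Complex.ofReal_exp, Real.exp_log hr]]
    rw [← Complex.exp_add]
    congr 1
    push_cast
    ring
  rw [← h2]
  ring

include hre in
lemma hFexp (s : ℂ) (θ : ℝ) :
    (qc A θ) ^ (-s) * ((aq A θ : ℝ) : ℂ) ^ (s - 1) = Fm A s θ := by
  rw [Complex.cpow_def_of_ne_zero (hqne hre θ), cpow_ofReal_pos (haqpos hre θ),
    ← Complex.exp_add, Fm, cf]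
  congr 1
  ring

include hre in
lemma hRc (s : ℂ) (θ : ℝ) :
    ((Rr A θ : ℝ) : ℂ) ^ ((1:ℂ) - 2*s + 1) = ((aq A θ : ℝ) : ℂ) ^ (s - 1) := by
  rw [cpow_ofReal_pos (hRpos hre θ), cpow_ofReal_pos (haqpos hre θ), Rr,
    Real.log_rpow (haqpos hre θ)]
  congr 1
  push_cast
  ring

end repos


section bounds

variable {B : ℝ} (hre : ∀ θ, 0 < (qc A θ).re)
variable (hB : ∀ θ ∈ Icc (-π) π, ‖Complex.log (qc A θ)‖ ≤ B) (hB0 : 0 ≤ B)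

include hre hB in
lemma hlog_le {θ : ℝ} (hθ : θ ∈ Icc (-π) π) : |Real.log (aq A θ)| ≤ B := by
  have : Real.log (aq A θ) = (Complex.log (qc A θ)).re := (Complex.log_re _).symm
  rw [this]
  exact (Complex.abs_re_le_norm _).trans (hB θ hθ)

include hre hB in
lemma harg_le {θ : ℝ} (hθ : θ ∈ Icc (-π) π) : |Complex.arg (qc A θ)| ≤ B := by
  have : Complex.arg (qc A θ) = (Complex.log (qc A θ)).im := (Complex.log_im _).symm
  rw [this]
  exact (Complex.abs_im_le_norm _).trans (hB θ hθ)

include hre hB in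
lemma haq_le {θ : ℝ} (hθ : θ ∈ Icc (-π) π) : aq A θ ≤ Real.exp B := by
  rw [← Real.exp_log (haqpos hre θ)]
  exact Real.exp_le_exp.2 ((le_abs_self _).trans (hlog_le hre hB hθ))

include hre hB in
lemma haq_ge {θ : ℝ} (hθ : θ ∈ Icc (-π) π) : Real.exp (-B) ≤ aq A θ := by
  rw [← Real.exp_log (haqpos hre θ)]
  exact Real.exp_le_exp.2 (by have := abs_le.1 (hlog_le hre hB hθ); linarith)

include hre hB hB0 in
lemma hR_le {θ : ℝ} (hθ : θ ∈ Icc (-π) π) : Rr A θ ≤ Real.exp B := by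
  rw [Rr, Real.rpow_def_of_pos (haqpos hre θ)]
  refine Real.exp_le_exp.2 ?_
  have := abs_le.1 (hlog_le hre hB hθ)
  nlinarith

include hre hB hB0 in
lemma hR_ge {θ : ℝ} (hθ : θ ∈ Icc (-π) π) : Real.exp (-B) ≤ Rr A θ := by
  rw [Rr, Real.rpow_def_of_pos (haqpos hre θ)]
  refine Real.exp_le_exp.2 ?_
  have := abs_le.1 (hlog_le hre hB hθ)
  nlinarith

include hre hB in
lemma hnorm_polar (s : ℂ) {p : ℝ × ℝ} (hp : p ∈ polarCoord.target) :
    ‖p.1 • (quadForm A (polarCoord.symm p)) ^ (-s)‖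
      ≤ (Real.exp (B * |s.re|) * Real.exp (B * |s.im|)) * p.1 ^ (1 - 2*s.re) := by
  obtain ⟨r, θ⟩ := p
  have hr : 0 < r := hp.1
  have hθ : θ ∈ Icc (-π) π := Ioo_subset_Icc_self hp.2
  have habs : 0 < ‖qc A θ‖ := norm_pos_iff.mpr (hqne hre θ)
  have hz : ((r^2 : ℝ) : ℂ) * qc A θ ≠ 0 :=
    mul_ne_zero (by exact_mod_cast (by positivity : (0:ℝ) < r^2).ne') (hqne hre θ)
  dsimp only
  rw [norm_smul, Real.norm_eq_abs, abs_of_pos hr, hquadp,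
    Complex.norm_cpow_of_ne_zero hz]
  rw [norm_mul, Complex.norm_real, Real.norm_eq_abs, abs_of_pos (by positivity : (0:ℝ) < r^2),
    Complex.arg_real_mul _ (by positivity : (0:ℝ) < r^2)]
  rw [Complex.neg_re, Complex.neg_im]
  have hdiv : (r ^ 2 * ‖qc A θ‖) ^ (-s.re)
        / Real.exp (Complex.arg (qc A θ) * -s.im)
      = (r ^ 2 * ‖qc A θ‖) ^ (-s.re)
        * Real.exp (Complex.arg (qc A θ) * s.im) := by
    rw [show Complex.arg (qc A θ) * -s.im = -(Complex.arg (qc A θ) * s.im) by ring,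
      Real.exp_neg, div_inv_eq_mul]
  rw [hdiv]
  have hsplit : (r ^ 2 * ‖qc A θ‖) ^ (-s.re)
      = r ^ (-(2*s.re)) * ‖qc A θ‖ ^ (-s.re) := by
    rw [Real.mul_rpow (by positivity) habs.le, ← Real.rpow_natCast r 2,
      ← Real.rpow_mul hr.le]
    norm_num
  rw [hsplit]
  have haqb : ‖qc A θ‖ ^ (-s.re) ≤ Real.exp (B * |s.re|) := by
    rw [Real.rpow_def_of_pos habs]
    refine Real.exp_le_exp.2 ?_
    calc Real.log (‖qc A θ‖) * (-s.re)
        ≤ |Real.log (‖qc A θ‖) * (-s.re)| := le_abs_self _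
      _ = |Real.log (‖qc A θ‖)| * |s.re| := by rw [abs_mul, abs_neg]
      _ ≤ B * |s.re| := mul_le_mul_of_nonneg_right (hlog_le hre hB hθ) (abs_nonneg _)
  have hargb : Real.exp (Complex.arg (qc A θ) * s.im) ≤ Real.exp (B * |s.im|) := by
    refine Real.exp_le_exp.2 ?_
    calc Complex.arg (qc A θ) * s.im ≤ |Complex.arg (qc A θ) * s.im| := le_abs_self _
      _ = |Complex.arg (qc A θ)| * |s.im| := abs_mul _ _
      _ ≤ B * |s.im| := mul_le_mul_of_nonneg_right (harg_le hre hB hθ) (abs_nonneg _)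
  calc r * (r ^ (-(2*s.re)) * ‖qc A θ‖ ^ (-s.re)
        * Real.exp (Complex.arg (qc A θ) * s.im))
      = r ^ (1 - 2*s.re) * (‖qc A θ‖ ^ (-s.re)
        * Real.exp (Complex.arg (qc A θ) * s.im)) := by
        rw [show (1 : ℝ) - 2*s.re = 1 + -(2*s.re) by ring, Real.rpow_add hr,
          Real.rpow_one]
        ring
    _ ≤ r ^ (1 - 2*s.re) * (Real.exp (B * |s.re|) * Real.exp (B * |s.im|)) := by
        refine mul_le_mul_of_nonneg_left ?_ (Real.rpow_nonneg hr.le _)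
        exact mul_le_mul haqb hargb (Real.exp_pos _).le (Real.exp_pos _).le
    _ = (Real.exp (B * |s.re|) * Real.exp (B * |s.im|)) * r ^ (1 - 2*s.re) := mul_comm _ _

include hre hB hB0 in
lemma hFm_bound (s : ℂ) {θ : ℝ} (hθ : θ ∈ Icc (-π) π) :
    ‖Fm A s θ‖ ≤ Real.exp (‖s‖ * (2*B) + B) := by
  have hcf : ‖cf A θ‖ ≤ 2*B := by
    rw [cf]
    refine (norm_sub_le _ _).trans ?_
    rw [Complex.norm_real, Real.norm_eq_abs]
    have := hlog_le hre hB hθ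
    have := hB θ hθ
    linarith
  rw [Fm, Complex.norm_exp]
  refine Real.exp_le_exp.2 ?_
  calc (s * cf A θ - ((Real.log (aq A θ) : ℝ) : ℂ)).re
      ≤ ‖s * cf A θ - ((Real.log (aq A θ) : ℝ) : ℂ)‖ := Complex.re_le_norm _
    _ ≤ ‖s * cf A θ‖ + ‖((Real.log (aq A θ) : ℝ) : ℂ)‖ := norm_sub_le _ _
    _ ≤ ‖s‖ * (2*B) + B := by
        rw [norm_mul, Complex.norm_real, Real.norm_eq_abs]
        have h1 := hlog_le hre hB hθ
        have h2 : ‖s‖ * ‖cf A θ‖ ≤ ‖s‖ * (2*B) :=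
          mul_le_mul_of_nonneg_left hcf (norm_nonneg _)
        linarith

include hre in
lemma hcf_cont : Continuous (cf A) := by
  have h1 : Continuous fun θ => Complex.log (qc A θ) :=
    continuous_iff_continuousAt.2 fun θ =>
      (continuousAt_clog (Complex.mem_slitPlane_iff.2 (Or.inl (hre θ)))).comp (hqc_cont A).continuousAt
  have h2 : Continuous fun θ => Real.log (aq A θ) :=
    continuous_iff_continuousAt.2 fun θ =>
      (Real.continuousAt_log (haqpos hre θ).ne').comp
        (continuous_norm.comp (hqc_cont A)).continuousAt
  exact (Complex.continuous_ofReal.comp h2).sub h1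

include hre in
lemma hFm_cont (s : ℂ) : Continuous (Fm A s) := by
  have h2 : Continuous fun θ => Real.log (aq A θ) :=
    continuous_iff_continuousAt.2 fun θ =>
      (Real.continuousAt_log (haqpos hre θ).ne').comp
        (continuous_norm.comp (hqc_cont A)).continuousAt
  exact Complex.continuous_exp.comp
    (((continuous_const.mul (hcf_cont hre)).sub (Complex.continuous_ofReal.comp h2)))

include hre hB hB0 in
lemma hKK_deriv (s₀ : ℂ) :
    HasDerivAt (KK A) (∫ θ in Ioo (-π) π, Fm A s₀ θ * cf A θ) s₀ := by
  have key := hasDerivAt_integral_of_dominated_loc_of_deriv_le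
    (μ := volume.restrict (Ioo (-π) π)) (F := fun s θ => Fm A s θ)
    (F' := fun s θ => Fm A s θ * cf A θ) (x₀ := s₀)
    (bound := fun _ => Real.exp ((‖s₀‖ + 1) * (2*B) + B) * (2*B)) (Metric.ball_mem_nhds s₀ zero_lt_one)
    ?_ ?_ ?_ ?_ ?_ ?_
  · exact key.2
  · exact Filter.Eventually.of_forall fun s => (hFm_cont hre s).aestronglyMeasurable
  · refine Integrable.mono' (g := fun _ => Real.exp (‖s₀‖ * (2*B) + B))
      (integrableOn_const measure_Ioo_lt_top.ne)
      (hFm_cont hre s₀).aestronglyMeasurable ?_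
    refine (ae_restrict_iff' measurableSet_Ioo).2 (Filter.Eventually.of_forall fun θ hθ => ?_)
    exact hFm_bound hre hB hB0 s₀ (Ioo_subset_Icc_self hθ)
  · exact ((hFm_cont hre s₀).mul (hcf_cont hre)).aestronglyMeasurable
  · refine (ae_restrict_iff' measurableSet_Ioo).2 (Filter.Eventually.of_forall fun θ hθ => ?_)
    intro s hs
    have hcf : ‖cf A θ‖ ≤ 2*B := by
      rw [cf]
      refine (norm_sub_le _ _).trans ?_
      rw [Complex.norm_real, Real.norm_eq_abs]
      have := hlog_le hre hB (Ioo_subset_Icc_self hθ)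
      have := hB θ (Ioo_subset_Icc_self hθ)
      linarith
    have hsn : ‖s‖ ≤ ‖s₀‖ + 1 := by
      have h1 : ‖s - s₀‖ < 1 := mem_ball_iff_norm.1 hs
      calc ‖s‖ = ‖s₀ + (s - s₀)‖ := by ring_nf
        _ ≤ ‖s₀‖ + ‖s - s₀‖ := norm_add_le _ _
        _ ≤ ‖s₀‖ + 1 := by linarith
    rw [norm_mul]
    refine mul_le_mul ?_ hcf (norm_nonneg _) (Real.exp_pos _).le
    refine (hFm_bound hre hB hB0 s (Ioo_subset_Icc_self hθ)).trans ?_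
    refine Real.exp_le_exp.2 ?_
    have : ‖s‖ * (2*B) ≤ (‖s₀‖ + 1) * (2*B) :=
      mul_le_mul_of_nonneg_right hsn (by linarith)
    linarith
  · exact integrableOn_const measure_Ioo_lt_top.ne
  · refine Filter.Eventually.of_forall fun θ => ?_
    intro s _
    have h1 : HasDerivAt (fun s : ℂ => s * cf A θ - ((Real.log (aq A θ) : ℝ) : ℂ)) (cf A θ) s :=
      (hasDerivAt_mul_const _).sub_const _
    exact h1.cexp

end bounds


section main

variable {B : ℝ} (hre : ∀ θ, 0 < (qc A θ).re)
variable (hB : ∀ θ ∈ Icc (-π) π, ‖Complex.log (qc A θ)‖ ≤ B) (hB0 : 0 ≤ B)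

include hre in
lemma hS1eq :
    polarCoord.target ∩ ⇑polarCoord.symm ⁻¹' {x : ℝ × ℝ | ‖quadForm A x‖ ≤ 1}
      = {p : ℝ × ℝ | p.2 ∈ Ioo (-π) π ∧ p.1 ∈ Ioc 0 (Rr A p.2)} := by
  ext ⟨r, θ⟩
  simp only [polarCoord_target, mem_inter_iff, mem_preimage, mem_setOf_eq, mem_prod,
    mem_Ioi, mem_Ioo, mem_Ioc]
  constructor
  · rintro ⟨⟨hr, hθ⟩, hOm⟩
    exact ⟨hθ, hr, (hmem_iff hre hr θ).1 hOm⟩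
  · rintro ⟨hθ, hr, hle⟩
    exact ⟨⟨hr, hθ⟩, (hmem_iff hre hr θ).2 hle⟩

include hre in
lemma hS2eq :
    polarCoord.target ∩ ⇑polarCoord.symm ⁻¹' {x : ℝ × ℝ | ‖quadForm A x‖ ≤ 1}ᶜ
      = {p : ℝ × ℝ | p.2 ∈ Ioo (-π) π ∧ p.1 ∈ Ioi (Rr A p.2)} := by
  ext ⟨r, θ⟩
  simp only [polarCoord_target, mem_inter_iff, mem_preimage, mem_compl_iff, mem_setOf_eq,
    mem_prod, mem_Ioi, mem_Ioo, mem_Ioc, not_le]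
  constructor
  · rintro ⟨⟨hr, hθ⟩, hOm⟩
    refine ⟨hθ, ?_⟩
    by_contra hle
    exact absurd ((hmem_iff hre hr θ).2 (not_lt.1 hle)) (not_le.2 hOm)
  · rintro ⟨hθ, hr⟩
    have hr0 : 0 < r := lt_trans (hRpos hre θ) hr
    refine ⟨⟨hr0, hθ⟩, ?_⟩
    by_contra hle
    exact absurd ((hmem_iff hre hr0 θ).1 (not_lt.1 hle)) (not_le.2 hr)

include hre hB hB0 in
lemma int_inner {s : ℂ} (hs : s.re < 1) :
    IntegrableOn (fun p : ℝ × ℝ => p.1 • (quadForm A (polarCoord.symm p)) ^ (-s))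
      (polarCoord.target ∩ ⇑polarCoord.symm ⁻¹'
        {x : ℝ × ℝ | ‖quadForm A x‖ ≤ 1}) := by
  set C := Real.exp (B * |s.re|) * Real.exp (B * |s.im|) with hC
  have hsub : polarCoord.target ∩ ⇑polarCoord.symm ⁻¹'
        {x : ℝ × ℝ | ‖quadForm A x‖ ≤ 1}
      ⊆ Ioc (0:ℝ) (Real.exp B) ×ˢ Ioo (-π) π := by
    rw [hS1eq hre]
    rintro ⟨r, θ⟩ ⟨hθ, hr⟩
    exact ⟨⟨hr.1, hr.2.trans (hR_le hre hB hB0 (Ioo_subset_Icc_self hθ))⟩, hθ⟩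
  have hdom : IntegrableOn (fun p : ℝ × ℝ => C * p.1 ^ (1 - 2*s.re))
      (Ioc (0:ℝ) (Real.exp B) ×ˢ Ioo (-π) π) := by
    have h1 : IntegrableOn (fun r : ℝ => C * r ^ (1 - 2*s.re)) (Ioc (0:ℝ) (Real.exp B)) :=
      ((intervalIntegrable_iff_integrableOn_Ioc_of_le (Real.exp_pos B).le).1
        (intervalIntegral.intervalIntegrable_rpow' (by linarith))).const_mul C
    have h2 : IntegrableOn (fun _ : ℝ => (1:ℝ)) (Ioo (-π) π) :=
      integrableOn_const measure_Ioo_lt_top.ne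
    have h3 := Integrable.mul_prod h1 h2
    rw [Measure.prod_restrict] at h3
    rw [IntegrableOn, Measure.volume_eq_prod]
    simpa using h3
  refine Integrable.mono' (hdom.mono_set hsub) ?_ ?_
  · exact (measurable_fst.smul
      ((measurable_fs (A := A) s).comp continuous_polarCoord_symm.measurable)).aestronglyMeasurable
  · have hmeas : MeasurableSet (polarCoord.target ∩ ⇑polarCoord.symm ⁻¹'
        {x : ℝ × ℝ | ‖quadForm A x‖ ≤ 1}) :=
      polarCoord.open_target.measurableSet.inter (continuous_polarCoord_symm.measurable
        (isClosed_le (continuous_norm.comp (continuous_quadForm A))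
          continuous_const).measurableSet)
    refine (ae_restrict_iff' hmeas).2 (Filter.Eventually.of_forall fun p hp => ?_)
    exact hnorm_polar hre hB s hp.1

include hre hB hB0 in
lemma int_outer {s : ℂ} (hs : 1 < s.re) :
    IntegrableOn (fun p : ℝ × ℝ => p.1 • (quadForm A (polarCoord.symm p)) ^ (-s))
      (polarCoord.target ∩ ⇑polarCoord.symm ⁻¹'
        {x : ℝ × ℝ | ‖quadForm A x‖ ≤ 1}ᶜ) := by
  set C := Real.exp (B * |s.re|) * Real.exp (B * |s.im|) with hC
  have hsub : polarCoord.target ∩ ⇑polarCoord.symm ⁻¹'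
        {x : ℝ × ℝ | ‖quadForm A x‖ ≤ 1}ᶜ
      ⊆ Ioi (Real.exp (-B)) ×ˢ Ioo (-π) π := by
    rw [hS2eq hre]
    rintro ⟨r, θ⟩ ⟨hθ, hr⟩
    exact ⟨lt_of_le_of_lt (hR_ge hre hB hB0 (Ioo_subset_Icc_self hθ)) hr, hθ⟩
  have hdom : IntegrableOn (fun p : ℝ × ℝ => C * p.1 ^ (1 - 2*s.re))
      (Ioi (Real.exp (-B)) ×ˢ Ioo (-π) π) := by
    have h1 : IntegrableOn (fun r : ℝ => C * r ^ (1 - 2*s.re)) (Ioi (Real.exp (-B))) :=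
      (integrableOn_Ioi_rpow_of_lt (by linarith) (Real.exp_pos _)).const_mul C
    have h2 : IntegrableOn (fun _ : ℝ => (1:ℝ)) (Ioo (-π) π) :=
      integrableOn_const measure_Ioo_lt_top.ne
    have h3 := Integrable.mul_prod h1 h2
    rw [Measure.prod_restrict] at h3
    rw [IntegrableOn, Measure.volume_eq_prod]
    simpa using h3
  refine Integrable.mono' (hdom.mono_set hsub) ?_ ?_
  · exact (measurable_fst.smul
      ((measurable_fs (A := A) s).comp continuous_polarCoord_symm.measurable)).aestronglyMeasurable
  · have hmeas : MeasurableSet (polarCoord.target ∩ ⇑polarCoord.symm ⁻¹'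
        {x : ℝ × ℝ | ‖quadForm A x‖ ≤ 1}ᶜ) :=
      polarCoord.open_target.measurableSet.inter (continuous_polarCoord_symm.measurable
        (isClosed_le (continuous_norm.comp (continuous_quadForm A))
          continuous_const).measurableSet.compl)
    refine (ae_restrict_iff' hmeas).2 (Filter.Eventually.of_forall fun p hp => ?_)
    exact hnorm_polar hre hB s hp.1

lemma re_lin (s : ℂ) : ((1:ℂ) - 2*s + 1).re = 2 - 2*s.re := by
  simp [Complex.add_re, Complex.sub_re, Complex.mul_re]
  ring

lemma re_lin' (s : ℂ) : ((1:ℂ) - 2*s).re = 1 - 2*s.re := by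
  simp [Complex.sub_re, Complex.mul_re]

include hre in
lemma radial_inner {s : ℂ} (hs : s.re < 1) (θ : ℝ) :
    ∫ r in Ioc 0 (Rr A θ), ((r : ℝ) • (quadForm A (polarCoord.symm (r, θ))) ^ (-s))
      = ((2:ℂ) - 2*s)⁻¹ * Fm A s θ := by
  have hR := hRpos hre θ
  have hcongr : EqOn (fun r : ℝ => (r : ℝ) • (quadForm A (polarCoord.symm (r, θ))) ^ (-s))
      (fun r : ℝ => (r : ℂ) ^ ((1:ℂ) - 2*s) * (qc A θ) ^ (-s)) (Ioc 0 (Rr A θ)) :=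
    fun r hr => g_eq hre s hr.1 θ
  rw [setIntegral_congr_fun measurableSet_Ioc hcongr, integral_mul_const,
    ← intervalIntegral.integral_of_le hR.le,
    integral_cpow (Or.inl (by rw [re_lin']; linarith))]
  have hne : (1:ℂ) - 2*s + 1 ≠ 0 := by
    intro h
    have h2 := congrArg Complex.re h
    rw [re_lin, Complex.zero_re] at h2
    linarith
  rw [Complex.ofReal_zero, Complex.zero_cpow hne, hRc hre s θ, ← hFexp hre s θ]
  have h21 : (1:ℂ) - 2*s + 1 = 2 - 2*s := by ring
  rw [h21, sub_zero]
  ring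

include hre in
lemma radial_outer {s : ℂ} (hs : 1 < s.re) (θ : ℝ) :
    ∫ r in Ioi (Rr A θ), ((r : ℝ) • (quadForm A (polarCoord.symm (r, θ))) ^ (-s))
      = -(((2:ℂ) - 2*s)⁻¹ * Fm A s θ) := by
  have hR := hRpos hre θ
  have hcongr : EqOn (fun r : ℝ => (r : ℝ) • (quadForm A (polarCoord.symm (r, θ))) ^ (-s))
      (fun r : ℝ => (r : ℂ) ^ ((1:ℂ) - 2*s) * (qc A θ) ^ (-s)) (Ioi (Rr A θ)) :=
    fun r hr => g_eq hre s (lt_trans hR hr) θ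
  rw [setIntegral_congr_fun measurableSet_Ioi hcongr, integral_mul_const,
    integral_Ioi_cpow_of_lt (by rw [re_lin']; linarith) hR]
  rw [hRc hre s θ, ← hFexp hre s θ]
  have h21 : (1:ℂ) - 2*s + 1 = 2 - 2*s := by ring
  rw [h21]
  ring

end main

end QFAux

open QFAux in
/-- With `Ω = {x ∈ ℝ² : |Q_A(x)| ≤ 1}`, the integrals `I₁(s) = ∫_Ω Q_A(x)^{-s} dx`
(for `Re s < 1`) and `I₂(s) = ∫_{ℝ²∖Ω} Q_A(x)^{-s} dx` (for `Re s > 1`) converge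
absolutely, and there is a function `G` analytic on `ℂ ∖ {1}` with `G = I₁` on
`{Re s < 1}` and `G = -I₂` on `{Re s > 1}`. -/
theorem inner_outer_integrals_analytic_continuation
    (A : Matrix (Fin 2) (Fin 2) ℂ) (hsym : A.IsSymm) (hpd : (reMat A).PosDef) :
    (∀ s : ℂ, s.re < 1 →
      IntegrableOn (fun x : ℝ × ℝ => quadForm A x ^ (-s))
        {x : ℝ × ℝ | ‖quadForm A x‖ ≤ 1}) ∧
    (∀ s : ℂ, 1 < s.re →
      IntegrableOn (fun x : ℝ × ℝ => quadForm A x ^ (-s))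
        {x : ℝ × ℝ | ‖quadForm A x‖ ≤ 1}ᶜ) ∧
    ∃ G : ℂ → ℂ, DifferentiableOn ℂ G {s : ℂ | s ≠ 1} ∧
      (∀ s : ℂ, s.re < 1 →
        G s = ∫ x in {x : ℝ × ℝ | ‖quadForm A x‖ ≤ 1},
          quadForm A x ^ (-s)) ∧
      (∀ s : ℂ, 1 < s.re →
        G s = -∫ x in {x : ℝ × ℝ | ‖quadForm A x‖ ≤ 1}ᶜ,
          quadForm A x ^ (-s)) := by
  -- positivity of the real part on the circle
  have hre : ∀ θ : ℝ, 0 < (qc A θ).re := by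
    intro θ
    refine re_pos hsym hpd _ ?_
    intro h
    have h1 : Real.cos θ = 0 := congrArg Prod.fst h
    have h2 : Real.sin θ = 0 := congrArg Prod.snd h
    nlinarith [Real.sin_sq_add_cos_sq θ]
  -- the bound B
  obtain ⟨B, hB0, hB⟩ : ∃ B : ℝ, 0 ≤ B ∧ ∀ θ ∈ Icc (-π) π, ‖Complex.log (qc A θ)‖ ≤ B := by
    have hcont : ContinuousOn (fun θ => Complex.log (qc A θ)) (Icc (-π) π) := by
      refine Continuous.continuousOn ?_
      exact continuous_iff_continuousAt.2 fun θ =>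
        (continuousAt_clog (Complex.mem_slitPlane_iff.2 (Or.inl (hre θ)))).comp
          (hqc_cont A).continuousAt
    obtain ⟨B0, hB0'⟩ := isCompact_Icc.exists_bound_of_continuousOn hcont
    exact ⟨max B0 0, le_max_right _ _, fun θ hθ => (hB0' θ hθ).trans (le_max_left _ _)⟩
  have hOmMeas : MeasurableSet {x : ℝ × ℝ | ‖quadForm A x‖ ≤ 1} :=
    (isClosed_le (continuous_norm.comp (continuous_quadForm A))
      continuous_const).measurableSet
  refine ⟨?_, ?_, fun s => ((2:ℂ) - 2*s)⁻¹ * KK A s, ?_, ?_, ?_⟩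
  · -- inner integrability
    intro s hs
    exact (polar_transfer _ hOmMeas _).1.mpr (int_inner hre hB hB0 hs)
  · -- outer integrability
    intro s hs
    exact (polar_transfer _ hOmMeas.compl _).1.mpr (int_outer hre hB hB0 hs)
  · -- differentiability
    intro s hs
    have hs1 : s ≠ 1 := hs
    have h2 : (2:ℂ) - 2*s ≠ 0 := by
      intro h
      apply hs1
      apply mul_left_cancel₀ (two_ne_zero : (2:ℂ) ≠ 0)
      rw [mul_one]
      linear_combination -h
    have hK : DifferentiableAt ℂ (KK A) s := (hKK_deriv hre hB hB0 s).differentiableAt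
    exact (((differentiableAt_const (2:ℂ)).sub
      (differentiableAt_id.const_mul 2)).inv h2).mul hK |>.differentiableWithinAt
  · -- inner identity
    intro s hs
    have hSmeas : MeasurableSet {p : ℝ × ℝ | p.2 ∈ Ioo (-π) π ∧ p.1 ∈ Ioc 0 (Rr A p.2)} := by
      rw [← hS1eq hre]
      exact polarCoord.open_target.measurableSet.inter
        (QFAux.continuous_polarCoord_symm.measurable hOmMeas)
    have hint := int_inner hre hB hB0 hs
    rw [hS1eq hre] at hint
    rw [(polar_transfer _ hOmMeas _).2, hS1eq hre,
      fubini_polar (fun θ => measurableSet_Ioc) hSmeas hint]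
    have hradial : EqOn
        (fun θ => ∫ r in Ioc 0 (Rr A θ),
          (fun p : ℝ × ℝ => p.1 • quadForm A (polarCoord.symm p) ^ (-s)) (r, θ))
        (fun θ => ((2:ℂ) - 2*s)⁻¹ * Fm A s θ) (Ioo (-π) π) :=
      fun θ _ => radial_inner hre hs θ
    rw [setIntegral_congr_fun measurableSet_Ioo hradial, integral_const_mul]
    rfl
  · -- outer identity
    intro s hs
    have hSmeas : MeasurableSet {p : ℝ × ℝ | p.2 ∈ Ioo (-π) π ∧ p.1 ∈ Ioi (Rr A p.2)} := by
      rw [← hS2eq hre]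
      exact polarCoord.open_target.measurableSet.inter
        (QFAux.continuous_polarCoord_symm.measurable hOmMeas.compl)
    have hint := int_outer hre hB hB0 hs
    rw [hS2eq hre] at hint
    rw [(polar_transfer _ hOmMeas.compl _).2, hS2eq hre,
      fubini_polar (fun θ => measurableSet_Ioi) hSmeas hint]
    have hradial : EqOn
        (fun θ => ∫ r in Ioi (Rr A θ),
          (fun p : ℝ × ℝ => p.1 • quadForm A (polarCoord.symm p) ^ (-s)) (r, θ))
        (fun θ => -(((2:ℂ) - 2*s)⁻¹ * Fm A s θ)) (Ioo (-π) π) :=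
      fun θ _ => radial_outer hre hs θ
    rw [setIntegral_congr_fun measurableSet_Ioo hradial, integral_neg, integral_const_mul, neg_neg]
    rfl
end
end
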